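/- Let n, m, N be positive integers, let X̂₀, X̂₁ ∈ ℝ^{n×N} and U₀ ∈ ℝ^{m×N} be data matrices, and let D ⊆ ℝⁿ be a compact convex set. Assume: (i) the stacked matrix Z ∈ ℝ^{(n+m)×N} whose first n rows are X̂₀ and last m rows are U₀ has rank n + m; (ii) there exist A⋆ ∈ ℝ^{n×n} and B⋆ ∈ ℝ^{n×m} such that for every column index i, the residual (column i of X̂₁) − A⋆·(column i of X̂₀) − B⋆·(column i of U₀) lies in D. Then the data-consistency set I := { (A, B) ∈ ℝ^{n×n} × ℝ^{n×m} : for every column index i, (column i of X̂₁) − A·(column i of X̂₀) − B·(column i of U₀) ∈ D } is nonempty, convex, and compact. -/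

import Mathlib

open Matrix

/-- With full-row-rank stacked data matrix `Z = [X̂₀; U₀]` and a compact
convex residual set `D` containing the true residuals, the data-consistency set of pairs
`(A, B)` whose column residuals all lie in `D` is nonempty, convex, and compact. -/
theorem stmt1 {n m N : ℕ} (hn : 0 < n) (hm : 0 < m) (hN : 0 < N)
    (X0 X1 : Matrix (Fin n) (Fin N) ℝ) (U0 : Matrix (Fin m) (Fin N) ℝ)
    (D : Set (Fin n → ℝ)) (hDc : IsCompact D) (hDconv : Convex ℝ D)
    (Z : Matrix (Fin n ⊕ Fin m) (Fin N) ℝ) (hZ : Z = Matrix.fromRows X0 U0)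
    (hrank : Z.rank = n + m)
    (htrue : ∃ (As : Matrix (Fin n) (Fin n) ℝ) (Bs : Matrix (Fin n) (Fin m) ℝ),
      ∀ i : Fin N, X1ᵀ i - As.mulVec (X0ᵀ i) - Bs.mulVec (U0ᵀ i) ∈ D)
    (I : Set (Matrix (Fin n) (Fin n) ℝ × Matrix (Fin n) (Fin m) ℝ))
    (hI : I = { AB | ∀ i : Fin N,
      X1ᵀ i - AB.1.mulVec (X0ᵀ i) - AB.2.mulVec (U0ᵀ i) ∈ D }) :
    I.Nonempty ∧ Convex ℝ I ∧ IsCompact I := by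
  obtain ⟨As, Bs, hAB⟩ := htrue
  refine ⟨⟨(As, Bs), by rw [hI]; exact hAB⟩, ?_, ?_⟩
  · -- convexity
    rw [hI]
    intro p hp q hq a b ha hb hab
    intro i
    have key := hDconv (hp i) (hq i) ha hb hab
    have hb' : b = 1 - a := by linarith
    subst hb'
    convert key using 1
    have h1 : (a • p + (1 - a) • q).1 = a • p.1 + (1 - a) • q.1 := rfl
    have h2 : (a • p + (1 - a) • q).2 = a • p.2 + (1 - a) • q.2 := rfl
    rw [h1, h2, Matrix.add_mulVec, Matrix.add_mulVec,
      Matrix.smul_mulVec, Matrix.smul_mulVec,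
      Matrix.smul_mulVec, Matrix.smul_mulVec]
    funext j
    simp only [Pi.add_apply, Pi.sub_apply, Pi.smul_apply, smul_eq_mul]
    ring
  · -- compactness
    -- the linear map (A, B) ↦ (i ↦ A *ᵥ X0ᵀ i + B *ᵥ U0ᵀ i)
    set L : (Matrix (Fin n) (Fin n) ℝ × Matrix (Fin n) (Fin m) ℝ) →ₗ[ℝ]
        (Fin N → Fin n → ℝ) :=
      { toFun := fun AB => fun i => AB.1.mulVec (X0ᵀ i) + AB.2.mulVec (U0ᵀ i)
        map_add' := by
          intro x y
          funext i
          simp [Matrix.add_mulVec]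
          abel
        map_smul' := by
          intro c x
          funext i
          simp [Matrix.smul_mulVec, smul_add] } with hL
    -- Z's mulVecLin is surjective since rank = n + m
    have hsurj : Function.Surjective Z.mulVecLin := by
      have h1 : LinearMap.range Z.mulVecLin = ⊤ := by
        apply Submodule.eq_top_of_finrank_eq
        rw [← Matrix.rank, hrank]
        simp [Module.finrank_pi]
      exact LinearMap.range_eq_top.mp h1
    -- vecMul by Z is injective
    have hvec : ∀ v : Fin n ⊕ Fin m → ℝ, v ᵥ* Z = 0 → v = 0 := by
      intro v hv
      obtain ⟨w, hw⟩ := hsurj v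
      have : v ⬝ᵥ (Z *ᵥ w) = 0 := by
        rw [Matrix.dotProduct_mulVec, hv, zero_dotProduct]
      rw [Matrix.mulVecLin_apply] at hw
      rw [hw] at this
      exact (dotProduct_self_eq_zero).mp this
    -- L is injective
    have hker : LinearMap.ker L = ⊥ := by
      rw [LinearMap.ker_eq_bot]
      intro x y hxy
      have hz : L (x - y) = 0 := by rw [map_sub, hxy, sub_self]
      have hz' : ∀ i, (x.1 - y.1).mulVec (X0ᵀ i) + (x.2 - y.2).mulVec (U0ᵀ i) = 0 := by
        intro i
        have := congrFun hz i
        simpa [hL] using this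
      have hrow : ∀ j : Fin n, Sum.elim ((x.1 - y.1) j) ((x.2 - y.2) j) = 0 := by
        intro j
        apply hvec
        funext i
        have := congrFun (hz' i) j
        simp only [Matrix.vecMul, dotProduct, hZ, Pi.add_apply, Pi.zero_apply,
          Matrix.mulVec, dotProduct] at this ⊢
        rw [Fintype.sum_sum_type]
        simpa [Matrix.fromRows_apply_inl, Matrix.fromRows_apply_inr, Matrix.transpose_apply] using this
      have h1 : x.1 = y.1 := by
        ext j k
        have := congrFun (hrow j) (Sum.inl k)
        simpa [sub_eq_zero] using this
      have h2 : x.2 = y.2 := by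
        ext j k
        have := congrFun (hrow j) (Sum.inr k)
        simpa [sub_eq_zero] using this
      exact Prod.ext h1 h2
    have hembed := LinearMap.isClosedEmbedding_of_injective hker
    -- the target compact set
    set K : Set (Fin N → Fin n → ℝ) :=
      Set.univ.pi (fun i : Fin N => (fun y : Fin n → ℝ => X1ᵀ i - y) '' D) with hK
    have hKc : IsCompact K := by
      apply isCompact_univ_pi
      intro i
      exact hDc.image (by continuity)
    have hIeq : I = L ⁻¹' K := by
      rw [hI]
      ext AB
      simp only [Set.mem_setOf_eq, Set.mem_preimage, hK, Set.mem_pi, Set.mem_univ,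
        forall_true_left, Set.mem_image]
      constructor
      · intro h i
        refine ⟨X1ᵀ i - AB.1.mulVec (X0ᵀ i) - AB.2.mulVec (U0ᵀ i), h i, ?_⟩
        simp [hL]
        abel
      · intro h i
        obtain ⟨d, hd, hd2⟩ := h i
        have : X1ᵀ i - L AB i = d := by rw [← hd2]; abel
        simp only [hL, LinearMap.coe_mk, AddHom.coe_mk] at this
        have heq : X1ᵀ i - AB.1.mulVec (X0ᵀ i) - AB.2.mulVec (U0ᵀ i) = d := by
          rw [← this]; abel
        rw [heq]; exact hd
    rw [hIeq]
    exact hembed.isCompact_preimage hKc
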